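/- arXiv:2410.02777 — 3 statements merged into one kernel-verified Lean document; each statement's English description precedes it below -/
import Mathlib

section
/- Let Q be a finite index set of N answered queries, each query i having a fixed sensitive attribute s_i ∈ {a,b}; let N_a > 0 and N_b > 0 denote the number of indices with s_i = a and s_i = b respectively, and let ν be a natural number with ν ≤ min(N_a, N_b). Let o_h, o_m : Q → {0,1} be two outcome assignments (the honest outcomes and the measured outcomes), let X_h and X_m be the empirical demographic parity gaps of o_h and o_m respectively, and let ε = |X_h − X_m|. If a subset of size ν is drawn uniformly at random from the group-a indices and, independently, a subset of size ν is drawn uniformly at random from the group-b indices, then the probability that at least one sampled index i satisfies o_m(i) ≠ o_h(i) is at least 1 − (1 − ε/2)^ν. -/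
open Finset

lemma aux_desc (m n : ℕ) (h : m ≤ n) : ∀ ν : ℕ, m.descFactorial ν * n ^ ν ≤ n.descFactorial ν * m ^ ν
  | 0 => by simp
  | (ν+1) => by
    have key : (m - ν) * n ≤ (n - ν) * m := by
      calc (m - ν) * n = m * n - ν * n := Nat.sub_mul _ _ _
        _ ≤ n * m - ν * m := by
            rw [mul_comm m n]; exact Nat.sub_le_sub_left (Nat.mul_le_mul_left ν h) _
        _ = (n - ν) * m := (Nat.sub_mul _ _ _).symm
    calc m.descFactorial (ν+1) * n ^ (ν+1)
        = ((m - ν) * n) * (m.descFactorial ν * n ^ ν) := by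
          rw [Nat.descFactorial_succ, pow_succ]; ring
      _ ≤ ((n - ν) * m) * (n.descFactorial ν * m ^ ν) :=
          Nat.mul_le_mul key (aux_desc m n h ν)
      _ = n.descFactorial (ν+1) * m ^ (ν+1) := by
          rw [Nat.descFactorial_succ, pow_succ]; ring

lemma aux_choose (m n ν : ℕ) (h : m ≤ n) : m.choose ν * n ^ ν ≤ n.choose ν * m ^ ν := by
  have h1 := aux_desc m n h ν
  rw [Nat.descFactorial_eq_factorial_mul_choose, Nat.descFactorial_eq_factorial_mul_choose,
    mul_assoc, mul_assoc] at h1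
  exact Nat.le_of_mul_le_mul_left h1 (Nat.factorial_pos ν)

lemma aux_ratio (m n ν : ℕ) (h : m ≤ n) (hνn : ν ≤ n) (hn : 0 < n) :
    (m.choose ν : ℝ) / (n.choose ν : ℝ) ≤ ((m : ℝ) / n) ^ ν := by
  have hc : (0:ℝ) < n.choose ν := by exact_mod_cast Nat.choose_pos hνn
  have hnpow : (0:ℝ) < (n:ℝ) ^ ν := by positivity
  rw [div_pow, div_le_div_iff₀ hc hnpow]
  have := aux_choose m n ν h
  exact_mod_cast le_trans (by exact_mod_cast this) (le_of_eq (mul_comm _ _))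

lemma count_close {Q : Type*} [DecidableEq Q] (S : Finset Q) (f g : Q → Bool) :
    (S.filter (fun i => f i = true)).card ≤
      (S.filter (fun i => g i = true)).card + (S.filter (fun i => g i ≠ f i)).card := by
  calc (S.filter (fun i => f i = true)).card
      ≤ ((S.filter (fun i => g i = true)) ∪ (S.filter (fun i => g i ≠ f i))).card := by
        apply card_le_card
        intro i hi
        simp only [mem_filter, mem_union, ne_eq] at *
        by_cases hg : g i = true
        · exact Or.inl ⟨hi.1, hg⟩
        · exact Or.inr ⟨hi.1, by simp [hg, hi.2]⟩
    _ ≤ _ := card_union_le _ _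

/-- fail-ratio bound for one chosen group -/
lemma fail_bound (a' Na b' Nb ν : ℕ) (ha : a' ≤ Na) (hb : b' ≤ Nb)
    (hνa : ν ≤ Na) (hνb : ν ≤ Nb) (hNa : 0 < Na) :
    ((a'.choose ν : ℝ) * (b'.choose ν)) / ((Na.choose ν : ℝ) * (Nb.choose ν)) ≤
      ((a' : ℝ) / Na) ^ ν := by
  have hca : (0:ℝ) < Na.choose ν := by exact_mod_cast Nat.choose_pos hνa
  have hcb : (0:ℝ) < Nb.choose ν := by exact_mod_cast Nat.choose_pos hνb
  rw [← div_mul_div_comm]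
  calc ((a'.choose ν : ℝ) / (Na.choose ν)) * ((b'.choose ν : ℝ) / (Nb.choose ν))
      ≤ ((a'.choose ν : ℝ) / (Na.choose ν)) * 1 := by
        apply mul_le_mul_of_nonneg_left _ (by positivity)
        rw [div_le_one hcb]
        exact_mod_cast Nat.choose_le_choose ν hb
    _ = (a'.choose ν : ℝ) / (Na.choose ν) := mul_one _
    _ ≤ ((a' : ℝ) / Na) ^ ν := aux_ratio a' Na ν ha hνa hNa

/-- Soundness of the group-balanced probabilistic audit for the
demographic parity gap: if the honest and measured gaps deviate by `ε`, then a uniform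
size-`ν` sample from each group contains a modified query with probability at least
`1 - (1 - ε/2)^ν`. Probabilities are expressed as counting ratios over all pairs of
size-`ν` subsets of each group. -/
theorem audit_soundness_demographic_parity
    {Q : Type*} [Fintype Q] [DecidableEq Q]
    (s : Q → Bool) (oh om : Q → Bool)
    (A B : Finset Q)
    (hA : A = Finset.univ.filter (fun i => s i = true))
    (hB : B = Finset.univ.filter (fun i => s i = false))
    (hNa : 0 < A.card) (hNb : 0 < B.card)
    (ν : ℕ) (hν : ν ≤ min A.card B.card)
    (Xh Xm ε : ℝ)
    (hXh : Xh = |((A.filter (fun i => oh i = true)).card : ℝ) / (A.card : ℝ)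
              - ((B.filter (fun i => oh i = true)).card : ℝ) / (B.card : ℝ)|)
    (hXm : Xm = |((A.filter (fun i => om i = true)).card : ℝ) / (A.card : ℝ)
              - ((B.filter (fun i => om i = true)).card : ℝ) / (B.card : ℝ)|)
    (hε : ε = |Xh - Xm|) :
    1 - (1 - ε / 2) ^ ν ≤
      ((((A.powersetCard ν) ×ˢ (B.powersetCard ν)).filter
          (fun p => ∃ i ∈ p.1 ∪ p.2, om i ≠ oh i)).card : ℝ) /
        ((((A.powersetCard ν) ×ˢ (B.powersetCard ν)).card : ℝ)) := by
  clear hA hB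
  have hνa : ν ≤ A.card := le_trans hν (min_le_left _ _)
  have hνb : ν ≤ B.card := le_trans hν (min_le_right _ _)
  set A' := A.filter (fun i => om i = oh i) with hA'
  set B' := B.filter (fun i => om i = oh i) with hB'
  set MA := A.filter (fun i => ¬ om i = oh i) with hMA
  set MB := B.filter (fun i => ¬ om i = oh i) with hMB
  have hAsplit : A'.card + MA.card = A.card := card_filter_add_card_filter_not _
  have hBsplit : B'.card + MB.card = B.card := card_filter_add_card_filter_not _
  have haA : A'.card ≤ A.card := by omega
  have hbB : B'.card ≤ B.card := by omega
  -- real abbreviations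
  have hNaR : (0:ℝ) < A.card := by exact_mod_cast hNa
  have hNbR : (0:ℝ) < B.card := by exact_mod_cast hNb
  set dA : ℝ := (MA.card : ℝ) / (A.card : ℝ) with hdA
  set dB : ℝ := (MB.card : ℝ) / (B.card : ℝ) with hdB
  -- Step 1 : ε ≤ dA + dB
  have key_abs : ∀ (S : Finset Q) (M : Finset Q), M = S.filter (fun i => ¬ om i = oh i) →
      (0:ℝ) < S.card →
      |((S.filter (fun i => oh i = true)).card : ℝ) / S.card
        - ((S.filter (fun i => om i = true)).card : ℝ) / S.card| ≤ (M.card : ℝ) / S.card := by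
    intro S M hM hS
    have h1 := count_close S oh om
    have h2 := count_close S om oh
    have h3 : (S.filter (fun i => oh i ≠ om i)) = M := by
      rw [hM]; apply filter_congr; intro i _; simp [eq_comm]
    have h4 : (S.filter (fun i => om i ≠ oh i)) = M := by
      rw [hM]
    rw [h4] at h1; rw [h3] at h2
    have h1' : ((S.filter (fun i => oh i = true)).card : ℝ) ≤
        ((S.filter (fun i => om i = true)).card : ℝ) + M.card := by exact_mod_cast h1
    have h2' : ((S.filter (fun i => om i = true)).card : ℝ) ≤
        ((S.filter (fun i => oh i = true)).card : ℝ) + M.card := by exact_mod_cast h2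
    rw [div_sub_div_same, abs_div, abs_of_pos hS]
    gcongr
    rw [abs_le]
    constructor <;> linarith
  have habsA := key_abs A MA hMA hNaR
  have habsB := key_abs B MB hMB hNbR
  have hεle : ε ≤ dA + dB := by
    rw [hε, hXh, hXm]
    calc |(|((A.filter (fun i => oh i = true)).card : ℝ) / (A.card : ℝ)
              - ((B.filter (fun i => oh i = true)).card : ℝ) / (B.card : ℝ)|)
          - (|((A.filter (fun i => om i = true)).card : ℝ) / (A.card : ℝ)
              - ((B.filter (fun i => om i = true)).card : ℝ) / (B.card : ℝ)|)|
        ≤ |(((A.filter (fun i => oh i = true)).card : ℝ) / (A.card : ℝ)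
              - ((B.filter (fun i => oh i = true)).card : ℝ) / (B.card : ℝ))
          - (((A.filter (fun i => om i = true)).card : ℝ) / (A.card : ℝ)
              - ((B.filter (fun i => om i = true)).card : ℝ) / (B.card : ℝ))| :=
          abs_abs_sub_abs_le_abs_sub _ _
      _ = |(((A.filter (fun i => oh i = true)).card : ℝ) / (A.card : ℝ)
              - ((A.filter (fun i => om i = true)).card : ℝ) / (A.card : ℝ))
          + -(((B.filter (fun i => oh i = true)).card : ℝ) / (B.card : ℝ)
              - ((B.filter (fun i => om i = true)).card : ℝ) / (B.card : ℝ))| := by ring_nf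
      _ ≤ _ := by
          refine le_trans (abs_add_le _ _) ?_
          rw [abs_neg]
          exact add_le_add habsA habsB
  -- Step 2: complement counting
  have hcompl : ((A.powersetCard ν ×ˢ B.powersetCard ν).filter
      (fun p => ¬ ∃ i ∈ p.1 ∪ p.2, om i ≠ oh i))
      = (A'.powersetCard ν) ×ˢ (B'.powersetCard ν) := by
    ext ⟨S, T⟩
    simp only [mem_filter, mem_product, mem_powersetCard, mem_union, not_exists, ne_eq,
      not_not, hA', hB', subset_iff, Finset.mem_filter]
    constructor
    · rintro ⟨⟨⟨hSA, hSc⟩, hTB, hTc⟩, hall⟩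
      exact ⟨⟨fun x hx => ⟨hSA hx, by by_contra hne; exact hall x ⟨Or.inl hx, hne⟩⟩, hSc⟩,
             fun x hx => ⟨hTB hx, by by_contra hne; exact hall x ⟨Or.inr hx, hne⟩⟩, hTc⟩
    · rintro ⟨⟨hSA, hSc⟩, hTB, hTc⟩
      refine ⟨⟨⟨fun x hx => (hSA hx).1, hSc⟩, fun x hx => (hTB hx).1, hTc⟩, ?_⟩
      rintro i ⟨hi | hi, hne⟩
      · exact hne (hSA hi).2
      · exact hne (hTB hi).2
  have htot : (A.powersetCard ν ×ˢ B.powersetCard ν).card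
      = A.card.choose ν * B.card.choose ν := by
    simp [Finset.card_powersetCard]
  have hfail : ((A.powersetCard ν ×ˢ B.powersetCard ν).filter
      (fun p => ¬ ∃ i ∈ p.1 ∪ p.2, om i ≠ oh i)).card
      = A'.card.choose ν * B'.card.choose ν := by
    rw [hcompl]; simp [Finset.card_powersetCard]
  have hsplit := card_filter_add_card_filter_not
    (s := A.powersetCard ν ×ˢ B.powersetCard ν)
    (p := fun p => ∃ i ∈ p.1 ∪ p.2, om i ≠ oh i)
  have htotpos : 0 < (A.powersetCard ν ×ˢ B.powersetCard ν).card := by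
    rw [htot]
    exact Nat.mul_pos (Nat.choose_pos hνa) (Nat.choose_pos hνb)
  have htotposR : (0:ℝ) < ((A.powersetCard ν ×ˢ B.powersetCard ν).card : ℝ) := by
    exact_mod_cast htotpos
  -- express success ratio as 1 - fail ratio
  have hsucc : ((((A.powersetCard ν) ×ˢ (B.powersetCard ν)).filter
          (fun p => ∃ i ∈ p.1 ∪ p.2, om i ≠ oh i)).card : ℝ) /
        ((((A.powersetCard ν) ×ˢ (B.powersetCard ν)).card : ℝ))
      = 1 - ((A'.card.choose ν * B'.card.choose ν : ℕ) : ℝ) /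
        ((((A.powersetCard ν) ×ˢ (B.powersetCard ν)).card : ℝ)) := by
    have hsuccN : ((((A.powersetCard ν) ×ˢ (B.powersetCard ν)).filter
          (fun p => ∃ i ∈ p.1 ∪ p.2, om i ≠ oh i)).card : ℝ)
        = ((((A.powersetCard ν) ×ˢ (B.powersetCard ν)).card : ℝ))
          - ((A'.card.choose ν * B'.card.choose ν : ℕ) : ℝ) := by
      rw [← hfail]
      push_cast [← hsplit]
      ring
    rw [hsuccN, sub_div, div_self (ne_of_gt htotposR)]
  rw [hsucc]
  have hdA1 : dA ≤ 1 := by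
    rw [hdA, div_le_one hNaR]
    exact_mod_cast card_le_card (filter_subset _ _)
  have hdB1 : dB ≤ 1 := by
    rw [hdB, div_le_one hNbR]
    exact_mod_cast card_le_card (filter_subset _ _)
  have hA'eq : ((A'.card : ℝ)) / (A.card : ℝ) = 1 - dA := by
    rw [hdA]
    have : (A'.card : ℝ) = (A.card : ℝ) - MA.card := by
      have := hAsplit; push_cast [← this]; ring
    rw [this]; field_simp
  have hB'eq : ((B'.card : ℝ)) / (B.card : ℝ) = 1 - dB := by
    rw [hdB]
    have : (B'.card : ℝ) = (B.card : ℝ) - MB.card := by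
      have := hBsplit; push_cast [← this]; ring
    rw [this]; field_simp
  have hfinal : ((A'.card.choose ν * B'.card.choose ν : ℕ) : ℝ) /
      ((((A.powersetCard ν) ×ˢ (B.powersetCard ν)).card : ℝ)) ≤ (1 - ε / 2) ^ ν := by
    rw [htot]
    push_cast
    rcases le_total dA dB with hcase | hcase
    · -- ε/2 ≤ dB : use group B
      have hεB : ε / 2 ≤ dB := by linarith
      calc ((A'.card.choose ν : ℝ) * (B'.card.choose ν)) /
            ((A.card.choose ν : ℝ) * (B.card.choose ν))
          = ((B'.card.choose ν : ℝ) * (A'.card.choose ν)) /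
            ((B.card.choose ν : ℝ) * (A.card.choose ν)) := by ring
        _ ≤ ((B'.card : ℝ) / B.card) ^ ν :=
            fail_bound B'.card B.card A'.card A.card ν hbB haA hνb hνa hNb
        _ ≤ (1 - ε / 2) ^ ν := by
            apply pow_le_pow_left₀ (by positivity)
            rw [hB'eq]; linarith
    · have hεA : ε / 2 ≤ dA := by linarith
      calc ((A'.card.choose ν : ℝ) * (B'.card.choose ν)) /
            ((A.card.choose ν : ℝ) * (B.card.choose ν))
          ≤ ((A'.card : ℝ) / A.card) ^ ν :=
            fail_bound A'.card A.card B'.card B.card ν haA hbB hνa hνb hNa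
        _ ≤ (1 - ε / 2) ^ ν := by
            apply pow_le_pow_left₀ (by positivity)
            rw [hA'eq]; linarith
  linarith
end

section
/- Let Q be a finite index set where each index i has a sensitive attribute s_i ∈ {a,b}, with group sizes N_a = #{i : s_i = a} > 0 and N_b = #{i : s_i = b} > 0. Let o_h, o_m : Q → {0,1} be two outcome assignments, let k_a be the number of indices i with s_i = a at which o_h(i) ≠ o_m(i), and let k_b be the number of indices i with s_i = b at which o_h(i) ≠ o_m(i). Then the empirical demographic parity gaps X_h and X_m of o_h and o_m satisfy |X_h − X_m| ≤ k_a/N_a + k_b/N_b. In particular, if ε = |X_h − X_m| and p_a = k_a/N_a, p_b = k_b/N_b, then ε ≤ p_a + p_b. -/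
open Finset

lemma filter_card_diff_le {Q : Type*} [DecidableEq Q] (S : Finset Q) (oh om : Q → Bool) :
    |((S.filter (fun i => oh i = true)).card : ℝ)
      - ((S.filter (fun i => om i = true)).card : ℝ)|
      ≤ ((S.filter (fun i => oh i ≠ om i)).card : ℝ) := by
  have h1 : ((S.filter (fun i => oh i = true)).card : ℝ)
      = ∑ i ∈ S, (if oh i = true then (1:ℝ) else 0) := by
    rw [Finset.card_filter]; push_cast; rfl
  have h2 : ((S.filter (fun i => om i = true)).card : ℝ)
      = ∑ i ∈ S, (if om i = true then (1:ℝ) else 0) := by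
    rw [Finset.card_filter]; push_cast; rfl
  have h3 : ((S.filter (fun i => oh i ≠ om i)).card : ℝ)
      = ∑ i ∈ S, (if oh i ≠ om i then (1:ℝ) else 0) := by
    rw [Finset.card_filter]; push_cast; rfl
  rw [h1, h2, h3, ← Finset.sum_sub_distrib]
  refine le_trans (Finset.abs_sum_le_sum_abs _ _) (Finset.sum_le_sum fun i _ => ?_)
  cases h : oh i <;> cases h' : om i <;> simp [h, h']

/-- If `k_a` (resp. `k_b`) is the number of group-`a` (resp. group-`b`)
indices at which the honest and measured outcomes differ, then the demographic parity
gaps satisfy `|X_h - X_m| ≤ k_a/N_a + k_b/N_b`; in particular, with `ε = |X_h - X_m|`,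
`p_a = k_a/N_a`, and `p_b = k_b/N_b`, we have `ε ≤ p_a + p_b`. -/
theorem gap_deviation_le_modified_fractions
    {Q : Type*} [Fintype Q] [DecidableEq Q]
    (s : Q → Bool) (oh om : Q → Bool)
    (A B : Finset Q)
    (hA : A = Finset.univ.filter (fun i => s i = true))
    (hB : B = Finset.univ.filter (fun i => s i = false))
    (hNa : 0 < A.card) (hNb : 0 < B.card)
    (ka kb : ℕ)
    (hka : ka = (A.filter (fun i => oh i ≠ om i)).card)
    (hkb : kb = (B.filter (fun i => oh i ≠ om i)).card)
    (Xh Xm ε pa pb : ℝ)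
    (hXh : Xh = |((A.filter (fun i => oh i = true)).card : ℝ) / (A.card : ℝ)
              - ((B.filter (fun i => oh i = true)).card : ℝ) / (B.card : ℝ)|)
    (hXm : Xm = |((A.filter (fun i => om i = true)).card : ℝ) / (A.card : ℝ)
              - ((B.filter (fun i => om i = true)).card : ℝ) / (B.card : ℝ)|)
    (hε : ε = |Xh - Xm|)
    (hpa : pa = (ka : ℝ) / (A.card : ℝ)) (hpb : pb = (kb : ℝ) / (B.card : ℝ)) :
    |Xh - Xm| ≤ (ka : ℝ) / (A.card : ℝ) + (kb : ℝ) / (B.card : ℝ) ∧ ε ≤ pa + pb := by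
  have hNa' : (0:ℝ) < (A.card : ℝ) := by exact_mod_cast hNa
  have hNb' : (0:ℝ) < (B.card : ℝ) := by exact_mod_cast hNb
  have hAle := filter_card_diff_le A oh om
  have hBle := filter_card_diff_le B oh om
  set ah := ((A.filter (fun i => oh i = true)).card : ℝ)
  set am := ((A.filter (fun i => om i = true)).card : ℝ)
  set bh := ((B.filter (fun i => oh i = true)).card : ℝ)
  set bm := ((B.filter (fun i => om i = true)).card : ℝ)
  have key : |Xh - Xm| ≤ (ka : ℝ) / (A.card : ℝ) + (kb : ℝ) / (B.card : ℝ) := by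
    rw [hXh, hXm, hka, hkb]
    have h1 : |ah / A.card - bh / B.card - (am / A.card - bm / B.card)|
        ≤ |ah - am| / A.card + |bh - bm| / B.card := by
      have e : ah / A.card - bh / B.card - (am / A.card - bm / B.card)
          = (ah - am) / A.card + (-(bh - bm)) / B.card := by ring
      rw [e]
      refine le_trans (abs_add_le _ _) (le_of_eq ?_)
      rw [abs_div, abs_div, abs_neg, abs_of_pos hNa', abs_of_pos hNb']
    refine le_trans (le_trans (abs_abs_sub_abs_le_abs_sub _ _) h1) ?_
    gcongr
  refine ⟨key, ?_⟩
  rw [hε, hpa, hpb]; exact key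
end

section
/- Let Q be a finite index set of N answered queries, each query i having a fixed sensitive attribute s_i ∈ {a,b} and a fixed ground-truth label y_i ∈ {0,1}; let N_a > 0 and N_b > 0 denote the group sizes, and let ν be a natural number with ν ≤ min(N_a, N_b). Let o_h, o_m : Q → {0,1} be two predicted-outcome assignments, let X_h and X_m be the empirical false-positive-rate gaps of o_h and o_m respectively, and let ε = |X_h − X_m|. If a subset of size ν is drawn uniformly at random from the group-a indices and, independently, a subset of size ν is drawn uniformly at random from the group-b indices, then the probability that at least one sampled index i satisfies o_m(i) ≠ o_h(i) is at least 1 − (1 − ε/2)^ν. -/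
open Finset

lemma descFact_aux (n k : ℕ) : ∀ ν : ℕ,
    (n - k).descFactorial ν * n ^ ν ≤ n.descFactorial ν * (n - k) ^ ν := by
  intro ν
  induction ν with
  | zero => simp
  | succ m ih =>
    rw [Nat.descFactorial_succ, Nat.descFactorial_succ, pow_succ, pow_succ]
    have key : (n - k - m) * n ≤ (n - m) * (n - k) := by
      rcases le_or_gt n (k + m) with h | h
      · have h0 : n - k - m = 0 := by omega
        simp [h0]
      · obtain ⟨c, hc⟩ : ∃ c, n = k + m + c := ⟨n - k - m, by omega⟩
        subst hc
        have h1 : k + m + c - k - m = c := by omega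
        have h2 : k + m + c - m = k + c := by omega
        have h3 : k + m + c - k = m + c := by omega
        rw [h1, h2, h3]
        nlinarith
    calc (n - k - m) * (n - k).descFactorial m * (n ^ m * n)
        = ((n - k).descFactorial m * n ^ m) * ((n - k - m) * n) := by ring
      _ ≤ (n.descFactorial m * (n - k) ^ m) * ((n - m) * (n - k)) :=
          Nat.mul_le_mul ih key
      _ = (n - m) * n.descFactorial m * ((n - k) ^ m * (n - k)) := by ring

lemma choose_bound (n k ν : ℕ) :
    (n - k).choose ν * n ^ ν ≤ n.choose ν * (n - k) ^ ν := by
  have h := descFact_aux n k ν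
  rw [Nat.descFactorial_eq_factorial_mul_choose, Nat.descFactorial_eq_factorial_mul_choose] at h
  refine Nat.le_of_mul_le_mul_left ?_ (Nat.factorial_pos ν)
  calc (Nat.factorial ν) * ((n - k).choose ν * n ^ ν) = (Nat.factorial ν) * (n - k).choose ν * n ^ ν := by ring
    _ ≤ (Nat.factorial ν) * n.choose ν * (n - k) ^ ν := h
    _ = (Nat.factorial ν) * (n.choose ν * (n - k) ^ ν) := by ring

lemma ratio_bound (n k ν : ℕ) (hk : k ≤ n) (hn : 0 < n) :
    ((n - k).choose ν : ℝ) / (n.choose ν : ℝ) ≤ (1 - (k : ℝ) / n) ^ ν := by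
  have hn' : (0 : ℝ) < n := by exact_mod_cast hn
  have h1 : (1 - (k : ℝ) / n) = ((n - k : ℕ) : ℝ) / n := by
    rw [Nat.cast_sub hk]; field_simp
  rw [h1, div_pow]
  rcases le_or_gt ν n with hνn | hνn
  · have hpos : (0 : ℝ) < (n.choose ν : ℝ) := by exact_mod_cast Nat.choose_pos hνn
    rw [div_le_div_iff₀ hpos (by positivity)]
    have h := choose_bound n k ν
    have : ((n - k).choose ν : ℝ) * (n : ℝ) ^ ν ≤ (n.choose ν : ℝ) * ((n - k : ℕ) : ℝ) ^ ν := by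
      exact_mod_cast h
    linarith [this]
  · rw [Nat.choose_eq_zero_of_lt (lt_of_le_of_lt (Nat.sub_le n k) hνn)]
    simp
    positivity

lemma abs_gap_bound (ah bh am bm xa xb : ℝ) (h1 : |ah - am| ≤ xa) (h2 : |bh - bm| ≤ xb) :
    |(|ah - bh| - |am - bm|)| ≤ xa + xb := by
  refine le_trans (abs_abs_sub_abs_le_abs_sub _ _) ?_
  have h : (ah - bh) - (am - bm) = (ah - am) - (bh - bm) := by ring
  rw [h]
  exact le_trans (abs_sub _ _) (add_le_add h1 h2)

lemma card_diff_bound {Q : Type*} [DecidableEq Q] (A : Finset Q) (y oh om : Q → Bool) :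
    (A.filter (fun i => oh i = true ∧ y i = false)).card ≤
      (A.filter (fun i => om i = true ∧ y i = false)).card
        + (A.filter (fun i => ¬ om i = oh i)).card := by
  have hsub : A.filter (fun i => oh i = true ∧ y i = false) ⊆
      (A.filter (fun i => om i = true ∧ y i = false)) ∪ (A.filter (fun i => ¬ om i = oh i)) := by
    intro i hi
    simp only [mem_filter, mem_union] at hi ⊢
    rcases hi with ⟨hiA, h1, h2⟩
    by_cases hom : om i = true
    · exact Or.inl ⟨hiA, hom, h2⟩
    · exact Or.inr ⟨hiA, by simp [h1]; simpa using hom⟩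
  exact le_trans (card_le_card hsub) (card_union_le _ _)

/-- Audit soundness for the equalized-odds (false-positive-rate gap)
metric: if the honest and measured false-positive-rate gaps deviate by `ε`, then a
uniform size-`ν` sample from each group contains a modified query with probability at
least `1 - (1 - ε/2)^ν`. -/
theorem audit_soundness_fpr_gap
    {Q : Type*} [Fintype Q] [DecidableEq Q]
    (s : Q → Bool) (y : Q → Bool) (oh om : Q → Bool)
    (A B : Finset Q)
    (hA : A = Finset.univ.filter (fun i => s i = true))
    (hB : B = Finset.univ.filter (fun i => s i = false))
    (hNa : 0 < A.card) (hNb : 0 < B.card)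
    (ν : ℕ) (hν : ν ≤ min A.card B.card)
    (Xh Xm ε : ℝ)
    (hXh : Xh = |((A.filter (fun i => oh i = true ∧ y i = false)).card : ℝ) / (A.card : ℝ)
              - ((B.filter (fun i => oh i = true ∧ y i = false)).card : ℝ) / (B.card : ℝ)|)
    (hXm : Xm = |((A.filter (fun i => om i = true ∧ y i = false)).card : ℝ) / (A.card : ℝ)
              - ((B.filter (fun i => om i = true ∧ y i = false)).card : ℝ) / (B.card : ℝ)|)
    (hε : ε = |Xh - Xm|) :
    1 - (1 - ε / 2) ^ ν ≤
      ((((A.powersetCard ν) ×ˢ (B.powersetCard ν)).filter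
          (fun p => ∃ i ∈ p.1 ∪ p.2, om i ≠ oh i)).card : ℝ) /
        ((((A.powersetCard ν) ×ˢ (B.powersetCard ν)).card : ℝ)) := by
  classical
  set Na := A.card with hNadef
  set Nb := B.card with hNbdef
  set kA := (A.filter (fun i => ¬ om i = oh i)).card with hkA
  set kB := (B.filter (fun i => ¬ om i = oh i)).card with hkB
  have hkAle : kA ≤ Na := card_le_card (filter_subset _ _)
  have hkBle : kB ≤ Nb := card_le_card (filter_subset _ _)
  have hNa' : (0:ℝ) < Na := by exact_mod_cast hNa
  have hNb' : (0:ℝ) < Nb := by exact_mod_cast hNb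
  have hνa : ν ≤ Na := le_trans hν (min_le_left _ _)
  have hνb : ν ≤ Nb := le_trans hν (min_le_right _ _)
  -- Step 1 : ε ≤ kA/Na + kB/Nb
  have habs : ∀ (C : Finset Q), (0:ℝ) < (C.card : ℝ) →
      |((C.filter (fun i => oh i = true ∧ y i = false)).card : ℝ) / (C.card : ℝ)
        - ((C.filter (fun i => om i = true ∧ y i = false)).card : ℝ) / (C.card : ℝ)|
      ≤ ((C.filter (fun i => ¬ om i = oh i)).card : ℝ) / (C.card : ℝ) := by
    intro C hC
    have hA1 := card_diff_bound C y oh om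
    have hA2 := card_diff_bound C y om oh
    have hkC : (C.filter (fun i => ¬ oh i = om i)).card
        = (C.filter (fun i => ¬ om i = oh i)).card := by
      congr 1
      apply filter_congr
      intro i _
      simp [eq_comm]
    rw [hkC] at hA2
    have hA1' : ((C.filter (fun i => oh i = true ∧ y i = false)).card : ℝ)
        ≤ ((C.filter (fun i => om i = true ∧ y i = false)).card : ℝ)
          + ((C.filter (fun i => ¬ om i = oh i)).card : ℝ) := by exact_mod_cast hA1
    have hA2' : ((C.filter (fun i => om i = true ∧ y i = false)).card : ℝ)
        ≤ ((C.filter (fun i => oh i = true ∧ y i = false)).card : ℝ)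
          + ((C.filter (fun i => ¬ om i = oh i)).card : ℝ) := by exact_mod_cast hA2
    rw [div_sub_div_same, abs_div, abs_of_pos hC]
    gcongr
    rw [abs_le]
    constructor <;> linarith
  have hεbound : ε ≤ (kA:ℝ)/Na + (kB:ℝ)/Nb := by
    rw [hε, hXh, hXm]
    exact abs_gap_bound _ _ _ _ _ _ (habs A hNa') (habs B hNb')
  have hεnn : 0 ≤ ε := by rw [hε]; exact abs_nonneg _
  -- Step 2 : counting
  set P := (A.powersetCard ν) ×ˢ (B.powersetCard ν) with hP
  have hPcard : P.card = Na.choose ν * Nb.choose ν := by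
    rw [hP, card_product, card_powersetCard, card_powersetCard]
  have hAeq : (A.filter (fun i => om i = oh i)).card = Na - kA := by
    have := card_filter_add_card_filter_not (s := A) (p := fun i => om i = oh i)
    omega
  have hBeq : (B.filter (fun i => om i = oh i)).card = Nb - kB := by
    have := card_filter_add_card_filter_not (s := B) (p := fun i => om i = oh i)
    omega
  have hMiss : P.filter (fun p => ¬ ∃ i ∈ p.1 ∪ p.2, om i ≠ oh i)
      = ((A.filter (fun i => om i = oh i)).powersetCard ν) ×ˢ
        ((B.filter (fun i => om i = oh i)).powersetCard ν) := by
    ext p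
    simp only [mem_filter, hP, mem_product, mem_powersetCard, mem_union, not_exists, ne_eq,
      not_not, not_and, Finset.subset_iff, mem_filter]
    constructor
    · rintro ⟨⟨⟨hp1, hc1⟩, ⟨hp2, hc2⟩⟩, hall⟩
      exact ⟨⟨fun i hi => ⟨hp1 hi, hall i (Or.inl hi)⟩, hc1⟩,
             ⟨fun i hi => ⟨hp2 hi, hall i (Or.inr hi)⟩, hc2⟩⟩
    · rintro ⟨⟨hp1, hc1⟩, ⟨hp2, hc2⟩⟩
      refine ⟨⟨⟨fun i hi => (hp1 hi).1, hc1⟩, ⟨fun i hi => (hp2 hi).1, hc2⟩⟩, ?_⟩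
      rintro i (hi | hi)
      · exact (hp1 hi).2
      · exact (hp2 hi).2
  have hMissCard : (P.filter (fun p => ¬ ∃ i ∈ p.1 ∪ p.2, om i ≠ oh i)).card
      = (Na - kA).choose ν * (Nb - kB).choose ν := by
    rw [hMiss, card_product, card_powersetCard, card_powersetCard, hAeq, hBeq]
  have hsplit := card_filter_add_card_filter_not (s := P)
    (p := fun p => ∃ i ∈ p.1 ∪ p.2, om i ≠ oh i)
  have hPpos : 0 < P.card := by
    rw [hPcard]
    exact Nat.mul_pos (Nat.choose_pos hνa) (Nat.choose_pos hνb)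
  have hPpos' : (0:ℝ) < (P.card : ℝ) := by exact_mod_cast hPpos
  have hHitCard : ((P.filter (fun p => ∃ i ∈ p.1 ∪ p.2, om i ≠ oh i)).card : ℝ)
      = (P.card : ℝ) - ((Na - kA).choose ν * (Nb - kB).choose ν : ℕ) := by
    rw [← hMissCard]
    have : (P.filter (fun p => ∃ i ∈ p.1 ∪ p.2, om i ≠ oh i)).card
        + (P.filter (fun p => ¬ ∃ i ∈ p.1 ∪ p.2, om i ≠ oh i)).card = P.card := hsplit
    push_cast [← this]
    ring
  rw [hHitCard, sub_div, div_self (ne_of_gt hPpos')]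
  have hratio : (((Na - kA).choose ν * (Nb - kB).choose ν : ℕ) : ℝ) / (P.card : ℝ)
      ≤ (1 - ε/2) ^ ν := by
    have rA := ratio_bound Na kA ν hkAle hNa
    have rB := ratio_bound Nb kB ν hkBle hNb
    have hcApos : (0:ℝ) < (Na.choose ν : ℝ) := by exact_mod_cast Nat.choose_pos hνa
    have hcBpos : (0:ℝ) < (Nb.choose ν : ℝ) := by exact_mod_cast Nat.choose_pos hνb
    have hprod : (((Na - kA).choose ν * (Nb - kB).choose ν : ℕ) : ℝ) / (P.card : ℝ)
        = (((Na - kA).choose ν : ℝ) / (Na.choose ν : ℝ))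
          * (((Nb - kB).choose ν : ℝ) / (Nb.choose ν : ℝ)) := by
      rw [hPcard, div_mul_div_comm]
      push_cast
      ring
    rw [hprod]
    have hArat_nn : (0:ℝ) ≤ ((Na - kA).choose ν : ℝ) / (Na.choose ν : ℝ) := by positivity
    have hBrat_nn : (0:ℝ) ≤ ((Nb - kB).choose ν : ℝ) / (Nb.choose ν : ℝ) := by positivity
    have hArat_le1 : ((Na - kA).choose ν : ℝ) / (Na.choose ν : ℝ) ≤ 1 := by
      rw [div_le_one hcApos]
      exact_mod_cast Nat.choose_le_choose ν (Nat.sub_le Na kA)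
    have hBrat_le1 : ((Nb - kB).choose ν : ℝ) / (Nb.choose ν : ℝ) ≤ 1 := by
      rw [div_le_one hcBpos]
      exact_mod_cast Nat.choose_le_choose ν (Nat.sub_le Nb kB)
    have hcase : ε/2 ≤ (kA:ℝ)/Na ∨ ε/2 ≤ (kB:ℝ)/Nb := by
      by_contra hcon
      push_neg at hcon
      linarith [hcon.1, hcon.2, hεbound]
    have hkAfrac : (kA:ℝ)/Na ≤ 1 := by
      rw [div_le_one hNa']; exact_mod_cast hkAle
    have hkBfrac : (kB:ℝ)/Nb ≤ 1 := by
      rw [div_le_one hNb']; exact_mod_cast hkBle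
    rcases hcase with hc | hc
    · calc (((Na - kA).choose ν : ℝ) / (Na.choose ν : ℝ))
            * (((Nb - kB).choose ν : ℝ) / (Nb.choose ν : ℝ))
          ≤ (((Na - kA).choose ν : ℝ) / (Na.choose ν : ℝ)) * 1 := by
            exact mul_le_mul_of_nonneg_left hBrat_le1 hArat_nn
        _ = ((Na - kA).choose ν : ℝ) / (Na.choose ν : ℝ) := mul_one _
        _ ≤ (1 - (kA:ℝ)/Na) ^ ν := rA
        _ ≤ (1 - ε/2) ^ ν := by
            apply pow_le_pow_left₀ (by linarith) (by linarith)
    · calc (((Na - kA).choose ν : ℝ) / (Na.choose ν : ℝ))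
            * (((Nb - kB).choose ν : ℝ) / (Nb.choose ν : ℝ))
          ≤ 1 * (((Nb - kB).choose ν : ℝ) / (Nb.choose ν : ℝ)) := by
            exact mul_le_mul_of_nonneg_right hArat_le1 hBrat_nn
        _ = ((Nb - kB).choose ν : ℝ) / (Nb.choose ν : ℝ) := one_mul _
        _ ≤ (1 - (kB:ℝ)/Nb) ^ ν := rB
        _ ≤ (1 - ε/2) ^ ν := by
            apply pow_le_pow_left₀ (by linarith) (by linarith)
  linarith [hratio]
end
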